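/- Let α : A → C, β : B → C, and f : A → B be homomorphisms of commutative rings. Then there exists an ideal J of B such that A⋈^f J equals the pullback α ×_C β if and only if α = β ∘ f; and when these equivalent conditions hold, the ideal J must equal Ker(β), i.e., α ×_C β = A⋈^f Ker(β). -/

import Mathlib

/-- The amalgamation `A ⋈^f J = {(a, f a + j) | a ∈ A, j ∈ J}` of `A` with `B`
along the ideal `J` of `B`, with respect to the ring homomorphism `f : A → B`,
as a subring of the product ring `A × B`. -/
def amalgamation {A B : Type*} [CommRing A] [CommRing B] (f : A →+* B) (J : Ideal B) :
    Subring (A × B) where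
  carrier := {x : A × B | ∃ a : A, ∃ j ∈ J, x = (a, f a + j)}
  one_mem' := ⟨1, 0, J.zero_mem, by simp [Prod.one_eq_mk]⟩
  zero_mem' := ⟨0, 0, J.zero_mem, by simp [Prod.zero_eq_mk]⟩
  mul_mem' := by
    rintro x y ⟨a, j, hj, rfl⟩ ⟨c, k, hk, rfl⟩
    refine ⟨a * c, f a * k + j * f c + j * k,
      J.add_mem (J.add_mem (J.mul_mem_left _ hk) (J.mul_mem_right _ hj)) (J.mul_mem_right _ hj),
      ?_⟩
    simp only [Prod.mk_mul_mk, map_mul, Prod.mk.injEq]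
    exact ⟨trivial, by ring⟩
  add_mem' := by
    rintro x y ⟨a, j, hj, rfl⟩ ⟨c, k, hk, rfl⟩
    refine ⟨a + c, j + k, J.add_mem hj hk, ?_⟩
    simp only [Prod.mk_add_mk, map_add, Prod.mk.injEq]
    exact ⟨trivial, by ring⟩
  neg_mem' := by
    rintro x ⟨a, j, hj, rfl⟩
    refine ⟨-a, -j, J.neg_mem hj, ?_⟩
    simp only [Prod.neg_mk, map_neg, Prod.mk.injEq]
    exact ⟨trivial, by ring⟩

/-- The pullback (fiber product) `α ×_C β = {(a, b) ∈ A × B | α a = β b}` of two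
ring homomorphisms `α : A → C` and `β : B → C`, as a subring of `A × B`. -/
def pullbackSubring {A B C : Type*} [CommRing A] [CommRing B] [CommRing C]
    (α : A →+* C) (β : B →+* C) : Subring (A × B) where
  carrier := {x : A × B | α x.1 = β x.2}
  one_mem' := by simp
  zero_mem' := by simp
  mul_mem' := by
    intro x y hx hy
    simp only [Set.mem_setOf_eq, Prod.fst_mul, Prod.snd_mul, map_mul] at *
    rw [hx, hy]
  add_mem' := by
    intro x y hx hy
    simp only [Set.mem_setOf_eq, Prod.fst_add, Prod.snd_add, map_add] at *
    rw [hx, hy]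
  neg_mem' := by
    intro x hx
    simp only [Set.mem_setOf_eq, Prod.fst_neg, Prod.snd_neg, map_neg] at *
    rw [hx]

theorem statement15 {A B C : Type*} [CommRing A] [CommRing B] [CommRing C]
    (α : A →+* C) (β : B →+* C) (f : A →+* B) :
    ((∃ J : Ideal B, amalgamation f J = pullbackSubring α β) ↔ α = β.comp f) ∧
    (α = β.comp f → pullbackSubring α β = amalgamation f (RingHom.ker β)) ∧
    (∀ J : Ideal B, amalgamation f J = pullbackSubring α β → J = RingHom.ker β) := by
  have hmem : ∀ (J : Ideal B) (x : A × B), x ∈ amalgamation f J ↔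
      ∃ a : A, ∃ j ∈ J, x = (a, f a + j) := fun J x => Iff.rfl
  have hmem' : ∀ (x : A × B), x ∈ pullbackSubring α β ↔ α x.1 = β x.2 := fun x => Iff.rfl
  have key : α = β.comp f → pullbackSubring α β = amalgamation f (RingHom.ker β) := by
    intro h
    ext x
    rw [hmem, hmem']
    constructor
    · intro hx
      refine ⟨x.1, x.2 - f x.1, ?_, by simp⟩
      rw [RingHom.mem_ker, map_sub, ← RingHom.comp_apply, ← h, hx, sub_self]
    · rintro ⟨a, j, hj, rfl⟩
      simp only [map_add, RingHom.mem_ker.mp hj, add_zero, ← RingHom.comp_apply, ← h]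
  have fwd : ∀ J : Ideal B, amalgamation f J = pullbackSubring α β → α = β.comp f := by
    intro J hJ
    ext a
    have : (a, f a + 0) ∈ pullbackSubring α β := by
      rw [← hJ, hmem]; exact ⟨a, 0, J.zero_mem, rfl⟩
    rw [hmem'] at this
    simpa using this
  refine ⟨⟨fun ⟨J, hJ⟩ => fwd J hJ, fun h => ⟨RingHom.ker β, (key h).symm⟩⟩, key, ?_⟩
  intro J hJ
  ext b
  rw [RingHom.mem_ker]
  constructor
  · intro hb
    have : (0, (0:B) + b) ∈ pullbackSubring α β := by
      rw [← hJ, hmem]; exact ⟨0, b, hb, by simp⟩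
    rw [hmem'] at this
    simpa using this.symm
  · intro hb
    have : ((0:A), b) ∈ amalgamation f J := by
      rw [hJ, hmem']; simp [hb]
    rw [hmem] at this
    obtain ⟨a, j, hj, he⟩ := this
    obtain ⟨h1, h2⟩ := Prod.mk.injEq .. ▸ he
    subst h1
    simpa [h2] using hj
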